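/- If C and D are substitution-closed classes of permutations, then the classes C ∘ D = {σ ∘ τ : σ ∈ C, τ ∈ D of the same size} and C⁻¹ = {σ⁻¹ : σ ∈ C} are also substitution-closed. -/

import Mathlib

/-- `π` is a pattern of `σ`: there is a strictly increasing map `f` such that the relative
order of values of `σ` on the image of `f` matches that of `π`. -/
def IsPattern {p m : ℕ} (π : Equiv.Perm (Fin p)) (σ : Equiv.Perm (Fin m)) : Prop :=
  ∃ f : Fin p → Fin m, StrictMono f ∧ ∀ i j : Fin p, π i < π j ↔ σ (f i) < σ (f j)

/-- The permutation 2413 (0-indexed values 1,3,0,2). -/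
def perm2413 : Equiv.Perm (Fin 4) where
  toFun := ![1, 3, 0, 2]
  invFun := ![2, 0, 3, 1]
  left_inv := by intro x; fin_cases x <;> rfl
  right_inv := by intro x; fin_cases x <;> rfl

/-- The permutation 3142 (0-indexed values 2,0,3,1). -/
def perm3142 : Equiv.Perm (Fin 4) where
  toFun := ![2, 0, 3, 1]
  invFun := ![1, 3, 0, 2]
  left_inv := by intro x; fin_cases x <;> rfl
  right_inv := by intro x; fin_cases x <;> rfl

/-- A permutation is separable iff it avoids both 2413 and 3142 as patterns. -/
def Separable {n : ℕ} (σ : Equiv.Perm (Fin n)) : Prop :=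
  ¬ IsPattern perm2413 σ ∧ ¬ IsPattern perm3142 σ

/-- A class of permutations: one set of permutations for each size. -/
abbrev PermClass := ∀ n : ℕ, Equiv.Perm (Fin n) → Prop

/-- `σ` is (an isomorphic copy of) the permutation of the biorder obtained by restricting
the two orders `lt1`, `lt2` to the subset `S`: the enumeration `e` lists `S` increasingly
with respect to `lt1`, and the relative order of the values of `σ` matches `lt2`. -/
def BiorderPerm {V : Type*} (lt1 lt2 : V → V → Prop) (S : Set V) {n : ℕ}
    (σ : Equiv.Perm (Fin n)) : Prop :=
  ∃ e : Fin n → V, (∀ i, e i ∈ S) ∧ (∀ x ∈ S, ∃ i, e i = x) ∧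
    (∀ i j : Fin n, i < j ↔ lt1 (e i) (e j)) ∧
    (∀ i j : Fin n, σ i < σ j ↔ lt2 (e i) (e j))

/-- Composition of two classes of permutations: `C ∘ D = {σ ∘ τ}`. -/
def PermClass.comp (C D : PermClass) : PermClass :=
  fun n σ => ∃ τ₁ τ₂ : Equiv.Perm (Fin n), C n τ₁ ∧ D n τ₂ ∧ σ = τ₁ * τ₂

/-- `C^k`: compositions of `k` permutations of `C` of the same size. -/
def PermClass.pow (C : PermClass) (k : ℕ) : PermClass :=
  fun n σ => ∃ l : List (Equiv.Perm (Fin n)), l.length = k ∧ (∀ τ ∈ l, C n τ) ∧ l.prod = σ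

/-- `C⁻¹ = {σ⁻¹ : σ ∈ C}`. -/
def PermClass.inv (C : PermClass) : PermClass := fun n σ => C n σ⁻¹

/-- `σ` is the (iterated one-step) substitution of the permutations `α i` inside `τ`:
there is a monotone surjection `g` onto `Fin m` whose fibres are the blocks, the pattern
of `σ` induced on the `i`-th block is `α i`, and distinct blocks compare according
to `τ`. -/
def IsInflation {m : ℕ} (τ : Equiv.Perm (Fin m)) (ns : Fin m → ℕ)
    (α : ∀ i : Fin m, Equiv.Perm (Fin (ns i))) {n : ℕ} (σ : Equiv.Perm (Fin n)) : Prop :=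
  ∃ g : Fin n → Fin m, Monotone g ∧ Function.Surjective g ∧
    (∀ i : Fin m, BiorderPerm (· < ·) (fun a b => σ a < σ b) {x | g x = i} (α i)) ∧
    (∀ x y : Fin n, g x ≠ g y → (σ x < σ y ↔ τ (g x) < τ (g y)))

/-- `C` is closed under substitution: substituting permutations of `C` inside a
permutation of `C` stays in `C`. -/
def ClosedUnderSubstitution (C : PermClass) : Prop :=
  ∀ (m : ℕ) (τ : Equiv.Perm (Fin m)) (ns : Fin m → ℕ)
    (α : ∀ i : Fin m, Equiv.Perm (Fin (ns i))) (n : ℕ) (σ : Equiv.Perm (Fin n)),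
    C m τ → (∀ i, C (ns i) (α i)) → IsInflation τ ns α σ → C n σ

/-- The order-reversing permutation of `Fin n`. -/
def finRevPerm (n : ℕ) : Equiv.Perm (Fin n) :=
  ⟨Fin.rev, Fin.rev, Fin.rev_rev, Fin.rev_rev⟩

/-- `C` is closed under symmetry: conjugating by the decreasing permutation stays in `C`. -/
def ClosedUnderSymmetry (C : PermClass) : Prop :=
  ∀ (n : ℕ) (σ : Equiv.Perm (Fin n)), C n σ → C n (finRevPerm n * σ * finRevPerm n)

/-- `C` is closed under taking patterns. -/
def ClosedUnderPatterns (C : PermClass) : Prop :=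
  ∀ (p m : ℕ) (π : Equiv.Perm (Fin p)) (σ : Equiv.Perm (Fin m)),
    IsPattern π σ → C m σ → C p π

/-- `C` is closed under inverse. -/
def ClosedUnderInverse (C : PermClass) : Prop :=
  ∀ (n : ℕ) (σ : Equiv.Perm (Fin n)), C n σ → C n σ⁻¹

/-- The class of separable permutations. -/
def SepClass : PermClass := fun _ σ => Separable σ

/-- `σ` is a `k`-shuffle of the class `C`: its domain can be partitioned into `k` sets,
on each of which the induced pattern of `σ` belongs to `C`. -/
def ShuffleOf (k : ℕ) (C : PermClass) {n : ℕ} (σ : Equiv.Perm (Fin n)) : Prop :=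
  ∃ X : Fin k → Set (Fin n), (∀ x : Fin n, ∃! i, x ∈ X i) ∧
    ∀ (i : Fin k) (m : ℕ) (τ : Equiv.Perm (Fin m)),
      BiorderPerm (· < ·) (fun a b => σ a < σ b) (X i) τ → C m τ

lemma sigma_mk_cast {m : ℕ} {f : Fin m → ℕ} {i j : Fin m} (h : i = j) (a : Fin (f i))
    (hf : f i = f j) :
    (⟨j, Fin.cast hf a⟩ : Σ i, Fin (f i)) = ⟨i, a⟩ := by
  subst h
  simp

lemma exists_twisted_lexEnum {m n : ℕ} (ns : Fin m → ℕ) (ρ : Equiv.Perm (Fin m))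
    (h : ∑ i, ns i = n) :
    ∃ E : (Σ i : Fin m, Fin (ns i)) ≃ Fin n,
      ∀ p q : (Σ i : Fin m, Fin (ns i)),
        E p < E q ↔ (ρ p.1 < ρ q.1 ∨ (p.1 = q.1 ∧ (p.2 : ℕ) < (q.2 : ℕ))) := by
  classical
  have hcard : Fintype.card (Σₗ k : Fin m, Fin (ns (ρ.symm k))) = n := by
    rw [← h]
    rw [Fintype.card_congr (ofLex : (Σₗ k : Fin m, Fin (ns (ρ.symm k))) ≃ _)]
    rw [Fintype.card_sigma]
    simp only [Fintype.card_fin]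
    exact Equiv.sum_comp (ρ.symm : Fin m ≃ Fin m) ns
  let oe := monoEquivOfFin (Σₗ k : Fin m, Fin (ns (ρ.symm k))) hcard
  let Eq0 : (Σ k : Fin m, Fin (ns (ρ.symm k))) ≃ Fin n :=
    (toLex : (Σ k : Fin m, Fin (ns (ρ.symm k))) ≃ _).trans oe.toEquiv.symm
  have lt0 : ∀ p q : (Σ k : Fin m, Fin (ns (ρ.symm k))),
      Eq0 p < Eq0 q ↔ (p.1 < q.1 ∨ (p.1 = q.1 ∧ (p.2 : ℕ) < (q.2 : ℕ))) := by
    rintro ⟨i, a⟩ ⟨j, b⟩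
    show oe.symm _ < oe.symm _ ↔ _
    rw [OrderIso.lt_iff_lt]
    rw [Sigma.Lex.lt_def]
    constructor
    · rintro (h' | ⟨h', h''⟩)
      · exact Or.inl h'
      · refine Or.inr ⟨h', ?_⟩
        revert h''
        cases h'
        intro h''
        exact h''
    · rintro (h' | ⟨h', h''⟩)
      · exact Or.inl h'
      · refine Or.inr ⟨h', ?_⟩
        revert h''
        cases h'
        intro h''
        exact h''
  let R : (Σ i : Fin m, Fin (ns i)) ≃ (Σ k : Fin m, Fin (ns (ρ.symm k))) :=
    { toFun := fun p => ⟨ρ p.1, Fin.cast (congrArg ns (ρ.symm_apply_apply p.1).symm) p.2⟩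
      invFun := fun q => ⟨ρ.symm q.1, q.2⟩
      left_inv := fun p => sigma_mk_cast (ρ.symm_apply_apply p.1).symm p.2 (congrArg ns (ρ.symm_apply_apply p.1).symm)
      right_inv := fun q => sigma_mk_cast (f := fun k => ns (ρ.symm k))
        (ρ.apply_symm_apply q.1).symm q.2
        (congrArg (fun k => ns (ρ.symm k)) (ρ.apply_symm_apply q.1).symm) }
  refine ⟨R.trans Eq0, ?_⟩
  intro p q
  show Eq0 (R p) < Eq0 (R q) ↔ _
  rw [lt0]
  simp only [R, Equiv.coe_fn_mk, Fin.coe_cast]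
  constructor
  · rintro (h' | ⟨h', h''⟩)
    · exact Or.inl h'
    · exact Or.inr ⟨ρ.injective h', h''⟩
  · rintro (h' | ⟨h', h''⟩)
    · exact Or.inl h'
    · exact Or.inr ⟨congrArg ρ h', h''⟩

lemma aux_inv (C : PermClass) (hC : ClosedUnderSubstitution C) :
    ClosedUnderSubstitution C.inv := by
  intro m τ ns α n σ hτ hα hinf
  obtain ⟨g, hg, hgs, hb, hout⟩ := hinf
  choose e he1 he2 he3 he4 using hb
  have hgE : ∀ (i : Fin m) (a : Fin (ns i)), g (e i a) = i := fun i a => he1 i a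
  show C n σ⁻¹
  refine hC m τ⁻¹ (fun k => ns (τ⁻¹ k)) (fun k => (α (τ⁻¹ k))⁻¹) n σ⁻¹ hτ
    (fun k => hα (τ⁻¹ k)) ?_
  refine ⟨fun x => τ (g (σ⁻¹ x)), ?_, ?_, ?_, ?_⟩
  · -- monotone
    intro x y hxy
    rcases eq_or_ne (g (σ⁻¹ x)) (g (σ⁻¹ y)) with h | h
    · show τ (g (σ⁻¹ x)) ≤ τ (g (σ⁻¹ y))
      simp only [h, le_refl]
    · rcases lt_or_eq_of_le hxy with hlt | rfl
      · have := (hout (σ⁻¹ x) (σ⁻¹ y) h).mp (by simpa using hlt)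
        exact this.le
      · exact le_rfl
  · -- surjective
    intro k
    obtain ⟨y, hy⟩ := hgs (τ⁻¹ k)
    refine ⟨σ y, ?_⟩
    simp [hy]
  · -- blocks
    intro k
    refine ⟨fun b => σ (e (τ⁻¹ k) ((α (τ⁻¹ k))⁻¹ b)), ?_, ?_, ?_, ?_⟩
    · intro b
      show τ (g (σ⁻¹ (σ _))) = k
      simp [hgE]
    · intro x hx
      have hx' : g (σ⁻¹ x) = τ⁻¹ k := by
        have : τ (g (σ⁻¹ x)) = k := hx
        simpa using congrArg (⇑τ⁻¹) this
      obtain ⟨s, hs⟩ := he2 (τ⁻¹ k) (σ⁻¹ x) hx'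
      refine ⟨α (τ⁻¹ k) s, ?_⟩
      simp only [Equiv.Perm.inv_def] at hs
      simp [hs]
    · intro b c
      have := (he4 (τ⁻¹ k) ((α (τ⁻¹ k))⁻¹ b) ((α (τ⁻¹ k))⁻¹ c))
      simpa using this.symm.trans (by simp : _ ↔ b < c) |>.symm
    · intro b c
      have h3 := he3 (τ⁻¹ k) ((α (τ⁻¹ k))⁻¹ b) ((α (τ⁻¹ k))⁻¹ c)
      simpa using h3
  · -- between blocks
    intro x y hxy
    have hne : g (σ⁻¹ x) ≠ g (σ⁻¹ y) := fun h => hxy (congrArg τ h)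
    have key : σ⁻¹ x < σ⁻¹ y ↔ g (σ⁻¹ x) < g (σ⁻¹ y) := by
      constructor
      · intro h
        exact lt_of_le_of_ne (hg h.le) hne
      · intro h
        exact hg.reflect_lt h
    simpa using key

lemma aux_comp (C D : PermClass) (hC : ClosedUnderSubstitution C)
    (hD : ClosedUnderSubstitution D) : ClosedUnderSubstitution (C.comp D) := by
  classical
  intro m τ ns α n σ hτ hα hinf
  obtain ⟨g, hg, hgs, hb, hout⟩ := hinf
  choose e he1 he2 he3 he4 using hb
  have hgE : ∀ (i : Fin m) (a : Fin (ns i)), g (e i a) = i := fun i a => he1 i a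
  set E : (Σ i : Fin m, Fin (ns i)) → Fin n := fun p => e p.1 p.2 with hEdef
  have hlt : ∀ (i j : Fin m) (a : Fin (ns i)) (b : Fin (ns j)), i < j → e i a < e j b := by
    intro i j a b hij
    exact hg.reflect_lt (by rw [hgE, hgE]; exact hij)
  have hElt : ∀ p q : (Σ i : Fin m, Fin (ns i)),
      E p < E q ↔ (p.1 < q.1 ∨ (p.1 = q.1 ∧ (p.2 : ℕ) < (q.2 : ℕ))) := by
    rintro ⟨i, a⟩ ⟨j, b⟩
    rcases lt_trichotomy i j with h | h | h
    · exact iff_of_true (hlt i j a b h) (Or.inl h)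
    · subst h
      refine ⟨fun h' => Or.inr ⟨rfl, Fin.lt_def.mp ((he3 i a b).mpr h')⟩, ?_⟩
      rintro (h' | ⟨-, h'⟩)
      · exact absurd h' (lt_irrefl i)
      · exact (he3 i a b).mp (Fin.lt_def.mpr h')
    · refine iff_of_false (fun hc => absurd (hlt j i b a h) (not_lt.mpr hc.le)) ?_
      rintro (h' | ⟨rfl, _⟩)
      · exact absurd h' (not_lt.mpr h.le)
      · exact lt_irrefl _ h
  have hEinj : Function.Injective E := by
    rintro ⟨i, a⟩ ⟨j, b⟩ hEq
    have hij : i = j := by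
      have h1 := congrArg g hEq
      rw [show g (E ⟨i, a⟩) = i from hgE i a, show g (E ⟨j, b⟩) = j from hgE j b] at h1
      exact h1
    subst hij
    have hEq' : e i a = e i b := hEq
    have hab : a = b := by
      by_contra hne
      rcases lt_or_gt_of_ne hne with h | h
      · exact absurd ((he3 i a b).mp h) (by rw [hEq']; exact lt_irrefl _)
      · exact absurd ((he3 i b a).mp h) (by rw [hEq']; exact lt_irrefl _)
    rw [hab]
  have hEsurj : Function.Surjective E := by
    intro x
    obtain ⟨a, ha⟩ := he2 (g x) x rfl
    exact ⟨⟨g x, a⟩, ha⟩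
  let EQ : (Σ i : Fin m, Fin (ns i)) ≃ Fin n := Equiv.ofBijective E ⟨hEinj, hEsurj⟩
  have hEQapp : ∀ p, EQ p = E p := fun p => rfl
  have hn : ∑ i, ns i = n := by
    have := Fintype.card_congr EQ
    simpa using this
  have hpos : ∀ i, 0 < ns i := by
    intro i
    obtain ⟨x, hx⟩ := hgs i
    obtain ⟨a, -⟩ := he2 i x hx
    exact a.pos
  obtain ⟨τ₁, τ₂, hτ₁, hτ₂, rfl⟩ := hτ
  choose β γ hβ hγ hαeq using hα
  obtain ⟨E'', hE''⟩ := exists_twisted_lexEnum ns τ₂ hn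
  let G : (Σ i : Fin m, Fin (ns i)) ≃ (Σ i : Fin m, Fin (ns i)) :=
    Equiv.sigmaCongrRight γ
  let σ₂ : Equiv.Perm (Fin n) := EQ.symm.trans (G.trans E'')
  have hσ₂app : ∀ p : (Σ i : Fin m, Fin (ns i)), σ₂ (E p) = E'' ⟨p.1, γ p.1 p.2⟩ := by
    intro p
    show E'' (G (EQ.symm (E p))) = _
    rw [show E p = EQ p from rfl, Equiv.symm_apply_apply]
    rfl
  have hσ₂inv : ∀ (i : Fin m) (b : Fin (ns i)),
      σ₂.symm (E'' ⟨i, b⟩) = E ⟨i, (γ i)⁻¹ b⟩ := by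
    intro i b
    have h1 : σ₂ (E ⟨i, (γ i)⁻¹ b⟩) = E'' ⟨i, b⟩ := by
      rw [hσ₂app]
      congr 1
      simp
    rw [← h1, Equiv.symm_apply_apply]
  -- σ₂ is an inflation of τ₂ by the γ's
  have hinf₂ : IsInflation τ₂ ns γ σ₂ := by
    refine ⟨fun x => (EQ.symm x).1, ?_, ?_, ?_, ?_⟩
    · -- monotone
      intro x y hxy
      by_contra hcon
      push_neg at hcon
      have : E (EQ.symm y) < E (EQ.symm x) := (hElt _ _).mpr (Or.inl hcon)
      rw [← hEQapp, ← hEQapp, Equiv.apply_symm_apply, Equiv.apply_symm_apply] at this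
      exact absurd hxy (not_le.mpr this)
    · -- surjective
      intro i
      exact ⟨E ⟨i, ⟨0, hpos i⟩⟩, congrArg Sigma.fst (EQ.symm_apply_apply ⟨i, ⟨0, hpos i⟩⟩)⟩
    · -- blocks
      intro i
      refine ⟨fun a => E ⟨i, a⟩, ?_, ?_, ?_, ?_⟩
      · intro a
        exact congrArg Sigma.fst (EQ.symm_apply_apply ⟨i, a⟩)
      · intro x hx
        obtain ⟨⟨j, a⟩, hp⟩ : ∃ p, EQ.symm x = p := ⟨_, rfl⟩
        have hx' : (EQ.symm x).1 = i := hx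
        rw [hp] at hx'
        dsimp at hx'
        subst hx'
        refine ⟨a, ?_⟩
        show EQ ⟨j, a⟩ = x
        rw [← hp]
        exact EQ.apply_symm_apply x
      · intro a b
        constructor
        · intro h
          exact (hElt ⟨i, a⟩ ⟨i, b⟩).mpr (Or.inr ⟨rfl, Fin.lt_def.mp h⟩)
        · intro h
          rcases (hElt ⟨i, a⟩ ⟨i, b⟩).mp h with h' | ⟨-, h'⟩
          · exact absurd h' (lt_irrefl i)
          · exact Fin.lt_def.mpr h'
      · intro a b
        show γ i a < γ i b ↔ σ₂ (E ⟨i, a⟩) < σ₂ (E ⟨i, b⟩)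
        rw [hσ₂app, hσ₂app, hE'']
        simp only [lt_self_iff_false, false_or, true_and]
        exact Fin.lt_def
    · -- between blocks
      intro x y hxy
      have hx : x = E (EQ.symm x) := by rw [← hEQapp, Equiv.apply_symm_apply]
      have hy : y = E (EQ.symm y) := by rw [← hEQapp, Equiv.apply_symm_apply]
      show σ₂ x < σ₂ y ↔ τ₂ (EQ.symm x).1 < τ₂ (EQ.symm y).1
      conv_lhs => rw [hx, hy, hσ₂app, hσ₂app, hE'']
      simp only [hxy, false_and, or_false]
  have hσ₂D : D n σ₂ := hD m τ₂ ns γ n σ₂ hτ₂ hγ hinf₂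
  -- σ₁ = σ * σ₂⁻¹
  set σ₁ : Equiv.Perm (Fin n) := σ * σ₂⁻¹ with hσ₁def
  have hσ₁app : ∀ (i : Fin m) (b : Fin (ns i)),
      σ₁ (E'' ⟨i, b⟩) = σ (E ⟨i, (γ i)⁻¹ b⟩) := by
    intro i b
    show σ (σ₂⁻¹ (E'' ⟨i, b⟩)) = _
    rw [show (σ₂⁻¹ : Equiv.Perm (Fin n)) = σ₂.symm from rfl, hσ₂inv]
  have hinf₁ : IsInflation τ₁ (fun k => ns (τ₂⁻¹ k)) (fun k => β (τ₂⁻¹ k)) σ₁ := by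
    refine ⟨fun x => τ₂ (E''.symm x).1, ?_, ?_, ?_, ?_⟩
    · -- monotone
      intro x y hxy
      by_contra hcon
      push_neg at hcon
      have : E'' ⟨(E''.symm y).1, (E''.symm y).2⟩ < E'' ⟨(E''.symm x).1, (E''.symm x).2⟩ :=
        (hE'' _ _).mpr (Or.inl hcon)
      simp only [Sigma.eta, Equiv.apply_symm_apply] at this
      exact absurd hxy (not_le.mpr this)
    · -- surjective
      intro k
      refine ⟨E'' ⟨τ₂⁻¹ k, ⟨0, hpos _⟩⟩, ?_⟩
      show τ₂ (E''.symm (E'' ⟨τ₂⁻¹ k, ⟨0, hpos _⟩⟩)).1 = k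
      rw [Equiv.symm_apply_apply]
      exact Equiv.apply_symm_apply τ₂ k
    · -- blocks
      intro k
      refine ⟨fun b => E'' ⟨τ₂⁻¹ k, b⟩, ?_, ?_, ?_, ?_⟩
      · intro b
        show τ₂ (E''.symm (E'' _)).1 = k
        rw [Equiv.symm_apply_apply]
        exact Equiv.apply_symm_apply τ₂ k
      · intro x hx
        obtain ⟨⟨j, c⟩, hp⟩ : ∃ p, E''.symm x = p := ⟨_, rfl⟩
        have hx' : τ₂ (E''.symm x).1 = k := hx
        rw [hp] at hx'
        have hj : j = τ₂⁻¹ k := by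
          have := congrArg (⇑τ₂⁻¹) hx'
          simpa using this
        subst hj
        refine ⟨c, ?_⟩
        show E'' ⟨τ₂⁻¹ k, c⟩ = x
        rw [← hp]
        exact E''.apply_symm_apply x
      · intro b c
        show b < c ↔ E'' ⟨τ₂⁻¹ k, b⟩ < E'' ⟨τ₂⁻¹ k, c⟩
        rw [hE'' ⟨τ₂⁻¹ k, b⟩ ⟨τ₂⁻¹ k, c⟩]
        simp only [lt_self_iff_false, false_or, true_and]
        exact Fin.lt_def
      · intro b c
        show β (τ₂⁻¹ k) b < β (τ₂⁻¹ k) c ↔ σ₁ (E'' ⟨τ₂⁻¹ k, b⟩) < σ₁ (E'' ⟨τ₂⁻¹ k, c⟩)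
        rw [hσ₁app, hσ₁app]
        have h4 := he4 (τ₂⁻¹ k) ((γ (τ₂⁻¹ k))⁻¹ b) ((γ (τ₂⁻¹ k))⁻¹ c)
        rw [hαeq (τ₂⁻¹ k)] at h4
        simp only [Equiv.Perm.mul_apply, Equiv.Perm.coe_inv, Equiv.apply_symm_apply] at h4
        exact h4
    · -- between blocks
      intro x y hxy
      have hx : x = E'' ⟨(E''.symm x).1, (E''.symm x).2⟩ := by
        simp only [Sigma.eta, Equiv.apply_symm_apply]
      have hy : y = E'' ⟨(E''.symm y).1, (E''.symm y).2⟩ := by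
        simp only [Sigma.eta, Equiv.apply_symm_apply]
      have hne : (E''.symm x).1 ≠ (E''.symm y).1 := fun h => hxy (congrArg (⇑τ₂) h)
      have hgE' : ∀ p : (Σ i : Fin m, Fin (ns i)), g (E p) = p.1 := fun p => hgE p.1 p.2
      have hsx : σ₁ x = σ (E ⟨(E''.symm x).1, (γ (E''.symm x).1)⁻¹ (E''.symm x).2⟩) := by
        conv_lhs => rw [show x = E'' ⟨(E''.symm x).1, (E''.symm x).2⟩ by
          simp only [Sigma.eta, Equiv.apply_symm_apply]]
        rw [hσ₁app]
      have hsy : σ₁ y = σ (E ⟨(E''.symm y).1, (γ (E''.symm y).1)⁻¹ (E''.symm y).2⟩) := by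
        conv_lhs => rw [show y = E'' ⟨(E''.symm y).1, (E''.symm y).2⟩ by
          simp only [Sigma.eta, Equiv.apply_symm_apply]]
        rw [hσ₁app]
      rw [hsx, hsy]
      have hgne : g (E ⟨(E''.symm x).1, (γ (E''.symm x).1)⁻¹ (E''.symm x).2⟩) ≠
          g (E ⟨(E''.symm y).1, (γ (E''.symm y).1)⁻¹ (E''.symm y).2⟩) := by
        rw [hgE', hgE']
        exact hne
      have hkey := hout _ _ hgne
      rw [hgE', hgE'] at hkey
      simpa [Equiv.Perm.mul_apply] using hkey
  have hσ₁C : C n σ₁ := hC m τ₁ (fun k => ns (τ₂⁻¹ k)) (fun k => β (τ₂⁻¹ k)) n σ₁ hτ₁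
    (fun k => hβ (τ₂⁻¹ k)) hinf₁
  exact ⟨σ₁, σ₂, hσ₁C, hσ₂D, (inv_mul_cancel_right σ σ₂).symm⟩

/-- If `C` and `D` are substitution-closed classes of permutations, then so are
`C ∘ D` and `C⁻¹`. -/
theorem comp_and_inv_substitution_closed (C D : PermClass)
    (hC : ClosedUnderSubstitution C) (hD : ClosedUnderSubstitution D) :
    ClosedUnderSubstitution (C.comp D) ∧ ClosedUnderSubstitution C.inv :=
  ⟨aux_comp C D hC hD, aux_inv C hC⟩
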